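/- arXiv:2603.24292 — 2 statements merged into one kernel-verified Lean document; each statement's English description precedes it below -/
import Mathlib

section
/- A triangle multigraph T_{a,b,c} on three vertices is 𝒮₅-contractible if and only if a + b + c ≥ 8 and min{a+b, a+c, b+c} ≥ 4. -/
open Finset

/-- A loopless multigraph on vertex type `V`, given by a symmetric multiplicity function. -/
structure Multigraph (V : Type*) where
  mult : V → V → ℕ
  symm : ∀ u v, mult u v = mult v u
  loopless : ∀ v, mult v v = 0

namespace Multigraph

variable {V W : Type*}

/-- The underlying simple graph (adjacency = positive multiplicity). -/
def toSimpleGraph (G : Multigraph V) : SimpleGraph V where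
  Adj u v := 0 < G.mult u v
  symm := by
    constructor
    intro u v h
    rwa [G.symm v u]
  loopless := by
    constructor
    intro v h
    simp [G.loopless v] at h

/-- Connectivity of a multigraph. -/
def Connected (G : Multigraph V) : Prop := G.toSimpleGraph.Connected

/-- Number of edges `e(G)`. -/
def edgeCount (G : Multigraph V) [Fintype V] : ℕ := (∑ u, ∑ v, G.mult u v) / 2

/-- `d(X)`: the number of edges with exactly one endpoint in `X`. -/
def cut (G : Multigraph V) [Fintype V] [DecidableEq V] (X : Finset V) : ℕ :=
  ∑ u ∈ X, ∑ v ∈ Xᶜ, G.mult u v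

/-- Degree of a vertex (with multiplicity). -/
def degree (G : Multigraph V) [Fintype V] (v : V) : ℕ := ∑ u, G.mult v u

/-- Number of edges of `G` with both endpoints in `A` (edges of the induced subgraph `G[A]`). -/
def edgesWithin (G : Multigraph V) (A : Finset V) : ℕ :=
  (∑ u ∈ A, ∑ v ∈ A, G.mult u v) / 2

/-- Weight of a family of parts: `Σ d(A) − 10·t + 16`. -/
def partsWeight (G : Multigraph V) [Fintype V] [DecidableEq V]
    (Ps : Finset (Finset V)) : ℤ :=
  (∑ A ∈ Ps, (G.cut A : ℤ)) - 10 * Ps.card + 16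

/-- Weight `w_G(𝒫)` of a vertex partition `𝒫`. -/
def pweight (G : Multigraph V) [Fintype V] [DecidableEq V]
    (P : Finpartition (univ : Finset V)) : ℤ :=
  G.partsWeight P.parts

/-- Weight `w_{G[A]}(Q)` of a partition `Q` of `A` in the induced subgraph `G[A]`. -/
def inducedWeight (G : Multigraph V) [DecidableEq V] (A : Finset V)
    (Q : Finpartition A) : ℤ :=
  (∑ B ∈ Q.parts, ((∑ u ∈ B, ∑ v ∈ A \ B, G.mult u v : ℕ) : ℤ))
    - 10 * Q.parts.card + 16

/-- Isomorphism of multigraphs. -/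
def Iso (G : Multigraph V) (H : Multigraph W) : Prop :=
  ∃ e : V ≃ W, ∀ u v, H.mult (e u) (e v) = G.mult u v

/-- Contraction `G/𝒫`: identify each part to a single vertex and delete loops. -/
def contract (G : Multigraph V) [Fintype V] [DecidableEq V]
    (P : Finpartition (univ : Finset V)) : Multigraph {A // A ∈ P.parts} where
  mult A B := if A = B then 0 else ∑ u ∈ A.1, ∑ v ∈ B.1, G.mult u v
  symm := by
    intro A B
    try dsimp only
    by_cases h : A = B
    · simp [h]
    · rw [if_neg h, if_neg (Ne.symm h), Finset.sum_comm]
      exact Finset.sum_congr rfl fun b _ => Finset.sum_congr rfl fun a _ => G.symm a b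
  loopless := by intro A; simp

/-- Adding one new edge between distinct existing vertices. -/
def addEdge (G : Multigraph V) [DecidableEq V] (x y : V) (hxy : x ≠ y) : Multigraph V where
  mult u v := G.mult u v + (if (u = x ∧ v = y) ∨ (u = y ∧ v = x) then 1 else 0)
  symm := by
    intro u v
    try dsimp only
    rw [G.symm u v]
    by_cases h1 : (u = x ∧ v = y) ∨ (u = y ∧ v = x)
    · rw [if_pos h1, if_pos (by tauto)]
    · rw [if_neg h1, if_neg (by tauto)]
  loopless := by
    intro v
    try dsimp only
    have h : ¬((v = x ∧ v = y) ∨ (v = y ∧ v = x)) := by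
      rintro (⟨rfl, rfl⟩ | ⟨rfl, rfl⟩) <;> exact hxy rfl
    simp [h, G.loopless]

/-- `aK₂`: two vertices joined by `a` parallel edges. -/
def kTwo (a : ℕ) : Multigraph (Fin 2) where
  mult u v := if u = v then 0 else a
  symm := by
    intro u v
    try dsimp only
    by_cases h : u = v
    · subst h; rfl
    · rw [if_neg h, if_neg (Ne.symm h)]
  loopless := by intro v; simp

def triMult (a b c : ℕ) : ℕ → ℕ → ℕ
  | 0, 1 => a | 1, 0 => a
  | 0, 2 => b | 2, 0 => b
  | 1, 2 => c | 2, 1 => c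
  | _, _ => 0

/-- `T_{a,b,c}`: three vertices, the three pairs joined by `a`, `b`, `c` parallel edges. -/
def triangle (a b c : ℕ) : Multigraph (Fin 3) where
  mult u v := triMult a b c u.val v.val
  symm := by intro u v; fin_cases u <;> fin_cases v <;> rfl
  loopless := by intro v; fin_cases v <;> rfl

def w1Mult : ℕ → ℕ → ℕ
  | 0, 1 => 1 | 1, 0 => 1 | 0, 2 => 1 | 2, 0 => 1 | 1, 2 => 1 | 2, 1 => 1
  | 0, 3 => 3 | 3, 0 => 3 | 1, 3 => 3 | 3, 1 => 3 | 2, 3 => 3 | 3, 2 => 3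
  | _, _ => 0

/-- The 4-vertex, 12-edge planar multigraph `W₁`: a triangle of single edges whose
three vertices are each joined to a central vertex by triple edges. -/
def W1 : Multigraph (Fin 4) where
  mult u v := w1Mult u.val v.val
  symm := by decide
  loopless := by decide

def w2Mult : ℕ → ℕ → ℕ
  | 0, 1 => 3 | 1, 0 => 3
  | 0, 2 => 2 | 2, 0 => 2 | 0, 3 => 2 | 3, 0 => 2
  | 1, 2 => 2 | 2, 1 => 2 | 1, 3 => 2 | 3, 1 => 2
  | 2, 3 => 1 | 3, 2 => 1
  | _, _ => 0

/-- The 4-vertex, 12-edge planar multigraph `W₂`. -/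
def W2 : Multigraph (Fin 4) where
  mult u v := w2Mult u.val v.val
  symm := by decide
  loopless := by decide

def q4Mult (a1 a2 a3 a4 : ℕ) : ℕ → ℕ → ℕ
  | 0, 1 => a1 | 1, 0 => a1
  | 1, 2 => a2 | 2, 1 => a2
  | 2, 3 => a3 | 3, 2 => a3
  | 3, 0 => a4 | 0, 3 => a4
  | _, _ => 0

/-- `Q_{a₁,a₂,a₃,a₄}`: the 4-cycle with edge multiplicities `a₁,…,a₄`. -/
def Q4 (a1 a2 a3 a4 : ℕ) : Multigraph (Fin 4) where
  mult u v := q4Mult a1 a2 a3 a4 u.val v.val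
  symm := by intro u v; fin_cases u <;> fin_cases v <;> rfl
  loopless := by intro v; fin_cases v <;> rfl

/-- Membership (up to isomorphism) in `𝒩₅ = {2K₂, 3K₂, T₁,₃,₃, T₂,₂,₃, W₁, W₂}`. -/
def InN5 (G : Multigraph V) : Prop :=
  G.Iso (kTwo 2) ∨ G.Iso (kTwo 3) ∨ G.Iso (triangle 1 3 3) ∨
    G.Iso (triangle 2 2 3) ∨ G.Iso W1 ∨ G.Iso W2

/-- `𝒮₅`-contractibility: `G` is connected, `w(G) ≥ 0` (every partition with at least
two parts has nonnegative weight), and no contraction of `G` lies in `𝒩₅`. -/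
def S5Contractible (G : Multigraph V) [Fintype V] [DecidableEq V] : Prop :=
  G.Connected ∧
    (∀ P : Finpartition (univ : Finset V), 2 ≤ P.parts.card → 0 ≤ G.pweight P) ∧
    (∀ P : Finpartition (univ : Finset V), ¬ InN5 (G.contract P))

/-- Strong `ℤ_ℓ`-connectivity: every zero-sum boundary `β` admits a `β`-orientation.
An orientation is encoded as `o : V → V → ℕ` where `o u v` is the number of the
`G.mult u v` parallel edges between `u` and `v` that are oriented from `u` to `v`. -/
def StronglyZConnected (G : Multigraph V) [Fintype V] (l : ℕ) : Prop :=
  ∀ β : V → ZMod l, ∑ v, β v = 0 →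
    ∃ o : V → V → ℕ, (∀ u v, o u v + o v u = G.mult u v) ∧
      ∀ v, (∑ u, (o v u : ZMod l)) - (∑ u, (o u v : ZMod l)) = β v

end Multigraph

open Multigraph
set_option maxRecDepth 10000 in
lemma parts_cases : ∀ (s : Finset (Finset (Fin 3))),
    s.sup id = Finset.univ → (∅ : Finset (Fin 3)) ∉ s →
    (∀ A ∈ s, ∀ B ∈ s, A ≠ B → Disjoint A B) →
    (s = {{0},{1},{2}} ∨ s = {{0},{1,2}} ∨ s = {{1},{0,2}} ∨ s = {{2},{0,1}} ∨
      s = {Finset.univ}) := by decide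

namespace Multigraph
variable {V W X : Type*}

lemma Iso.refl (G : Multigraph V) : G.Iso G := ⟨Equiv.refl V, fun _ _ => rfl⟩

lemma Iso.symm {G : Multigraph V} {H : Multigraph W} (h : G.Iso H) : H.Iso G := by
  obtain ⟨e, he⟩ := h
  refine ⟨e.symm, fun u v => ?_⟩
  have := he (e.symm u) (e.symm v)
  simp only [Equiv.apply_symm_apply] at this
  exact this.symm

lemma Iso.trans {G : Multigraph V} {H : Multigraph W} {K : Multigraph X}
    (h1 : G.Iso H) (h2 : H.Iso K) : G.Iso K := by
  obtain ⟨e, he⟩ := h1; obtain ⟨f, hf⟩ := h2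
  exact ⟨e.trans f, fun u v => by simp [Equiv.trans_apply, hf, he]⟩

lemma inN5_congr {G : Multigraph V} {H : Multigraph W} (h : G.Iso H) :
    InN5 G → InN5 H := by
  rintro (h1|h1|h1|h1|h1|h1) <;>
    [exact Or.inl (h.symm.trans h1);
     exact Or.inr (Or.inl (h.symm.trans h1));
     exact Or.inr (Or.inr (Or.inl (h.symm.trans h1)));
     exact Or.inr (Or.inr (Or.inr (Or.inl (h.symm.trans h1))));
     exact Or.inr (Or.inr (Or.inr (Or.inr (Or.inl (h.symm.trans h1)))));
     exact Or.inr (Or.inr (Or.inr (Or.inr (Or.inr (h.symm.trans h1)))))]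

lemma Iso.card_eq {G : Multigraph V} {H : Multigraph W} [Fintype V] [Fintype W]
    (h : G.Iso H) : Fintype.card V = Fintype.card W := by
  obtain ⟨e, -⟩ := h; exact Fintype.card_congr e

lemma Iso.sum_eq {G : Multigraph V} {H : Multigraph W} [Fintype V] [Fintype W]
    (h : G.Iso H) : ∑ u, ∑ v, G.mult u v = ∑ u, ∑ v, H.mult u v := by
  obtain ⟨e, he⟩ := h
  rw [← Equiv.sum_comp e (fun u => ∑ v, H.mult u v)]
  refine Finset.sum_congr rfl fun u _ => ?_
  rw [← Equiv.sum_comp e (fun v => H.mult (e u) v)]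
  exact Finset.sum_congr rfl fun v _ => (he u v).symm

lemma inN5_card {G : Multigraph V} [Fintype V] (h : InN5 G) :
    Fintype.card V = 2 ∨ Fintype.card V = 3 ∨ Fintype.card V = 4 := by
  rcases h with h|h|h|h|h|h <;> have := h.card_eq <;> simp at this <;> omega

lemma contract_pair_iso [Fintype V] [DecidableEq V] (G : Multigraph V)
    (P : Finpartition (Finset.univ : Finset V))
    (Xs Ys : Finset V) (hne : Xs ≠ Ys) (h : P.parts = {Xs, Ys}) :
    (G.contract P).Iso (kTwo (∑ u ∈ Xs, ∑ v ∈ Ys, G.mult u v)) := by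
  have hmem : ∀ A : {A // A ∈ P.parts}, A.1 = Xs ∨ A.1 = Ys := by
    intro A
    have h2 : (A : Finset V) ∈ ({Xs, Ys} : Finset (Finset V)) := by
      rw [← h]; exact A.2
    simpa using h2
  have hX : Xs ∈ P.parts := by rw [h]; simp
  have hY : Ys ∈ P.parts := by rw [h]; simp
  have hsymm : ∑ u ∈ Ys, ∑ v ∈ Xs, G.mult u v = ∑ u ∈ Xs, ∑ v ∈ Ys, G.mult u v := by
    rw [Finset.sum_comm]
    exact Finset.sum_congr rfl fun u _ => Finset.sum_congr rfl fun v _ => G.symm v u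
  refine ⟨⟨fun A => if A.1 = Xs then 0 else 1,
      fun i => if i = 0 then ⟨Xs, hX⟩ else ⟨Ys, hY⟩, ?_, ?_⟩, ?_⟩
  · intro A
    rcases hmem A with h1 | h1
    · simp [h1, Subtype.ext_iff]
    · simp [h1, Ne.symm hne, Subtype.ext_iff]
  · intro i
    fin_cases i
    · simp
    · simp [Ne.symm hne]
  · intro u v
    rcases hmem u with h1 | h1 <;> rcases hmem v with h2 | h2
    · have : u = v := Subtype.ext (h1.trans h2.symm)
      subst this
      simp [contract, kTwo]
    · have huv : u ≠ v := fun e => hne (h1.symm.trans (e ▸ h2))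
      simp [contract, kTwo, h1, h2, hne, Ne.symm hne, huv, Subtype.ext_iff, -SetLike.coe_eq_coe]
    · have huv : u ≠ v := fun e => hne (h2.symm.trans (e.symm ▸ h1))
      simp [contract, kTwo, h1, h2, hne, Ne.symm hne, huv, Subtype.ext_iff, -SetLike.coe_eq_coe, hsymm]
    · have : u = v := Subtype.ext (h1.trans h2.symm)
      subst this
      simp [contract, kTwo]

lemma contract_singletons_iso (G : Multigraph (Fin 3))
    (P : Finpartition (Finset.univ : Finset (Fin 3)))
    (h : P.parts = {{0},{1},{2}}) : (G.contract P).Iso G := by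
  have hmem : ∀ A : {A // A ∈ P.parts},
      (A : Finset (Fin 3)) = {0} ∨ (A : Finset (Fin 3)) = {1} ∨ (A : Finset (Fin 3)) = {2} := by
    intro A
    have h2 : (A : Finset (Fin 3)) ∈ ({{0},{1},{2}} : Finset (Finset (Fin 3))) := by
      rw [← h]; exact A.2
    simpa using h2
  have hm : ∀ i : Fin 3, ({i} : Finset (Fin 3)) ∈ P.parts := by
    intro i; rw [h]; fin_cases i <;> decide
  refine ⟨⟨fun A => if (A : Finset (Fin 3)) = {0} then 0 else
      if (A : Finset (Fin 3)) = {1} then 1 else 2,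
      fun i => ⟨{i}, hm i⟩, ?_, ?_⟩, ?_⟩
  · intro A
    rcases hmem A with h1 | h1 | h1 <;>
      simp [h1, Subtype.ext_iff,
        show ({1} : Finset (Fin 3)) ≠ {0} by decide,
        show ({2} : Finset (Fin 3)) ≠ {0} by decide,
        show ({2} : Finset (Fin 3)) ≠ {1} by decide]
  · intro i
    fin_cases i <;> simp <;> decide
  · intro u v
    rcases hmem u with h1 | h1 | h1 <;> rcases hmem v with h2 | h2 | h2 <;>
      simp [contract, h1, h2, Subtype.ext_iff, -SetLike.coe_eq_coe, G.loopless,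
        show ({1} : Finset (Fin 3)) ≠ {0} by decide,
        show ({2} : Finset (Fin 3)) ≠ {0} by decide,
        show ({2} : Finset (Fin 3)) ≠ {1} by decide,
        show ({0} : Finset (Fin 3)) ≠ {1} by decide,
        show ({0} : Finset (Fin 3)) ≠ {2} by decide,
        show ({1} : Finset (Fin 3)) ≠ {2} by decide]

lemma kTwo_inj {m n : ℕ} (h : (kTwo m).Iso (kTwo n)) : m = n := by
  obtain ⟨e, he⟩ := h
  have h01 : e 0 ≠ e 1 := by simp [e.apply_eq_iff_eq]
  have := he 0 1
  simpa [kTwo, h01] using this.symm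

end Multigraph

lemma tri_sum (a b c : ℕ) : ∑ u, ∑ v, (triangle a b c).mult u v = 2*(a+b+c) := by
  simp [triangle, triMult, Fin.sum_univ_succ]; ring

lemma cut0 (a b c : ℕ) : (triangle a b c).cut {0} = a + b := by
  simp [Multigraph.cut, triangle, triMult, show ({0}ᶜ : Finset (Fin 3)) = {1,2} by decide]

lemma cut1 (a b c : ℕ) : (triangle a b c).cut {1} = a + c := by
  simp [Multigraph.cut, triangle, triMult, show ({1}ᶜ : Finset (Fin 3)) = {0,2} by decide]

lemma cut2 (a b c : ℕ) : (triangle a b c).cut {2} = b + c := by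
  simp [Multigraph.cut, triangle, triMult, show ({2}ᶜ : Finset (Fin 3)) = {0,1} by decide]

lemma cut12 (a b c : ℕ) : (triangle a b c).cut {1,2} = a + b := by
  simp [Multigraph.cut, triangle, triMult,
    show ({1,2}ᶜ : Finset (Fin 3)) = {0} by decide, Finset.sum_insert]

lemma cut02 (a b c : ℕ) : (triangle a b c).cut {0,2} = a + c := by
  simp [Multigraph.cut, triangle, triMult,
    show ({0,2}ᶜ : Finset (Fin 3)) = {1} by decide, Finset.sum_insert]

lemma cut01 (a b c : ℕ) : (triangle a b c).cut {0,1} = b + c := by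
  simp [Multigraph.cut, triangle, triMult,
    show ({0,1}ᶜ : Finset (Fin 3)) = {2} by decide, Finset.sum_insert]

lemma pweight_sing (a b c : ℕ) (P : Finpartition (Finset.univ : Finset (Fin 3)))
    (h : P.parts = {{0},{1},{2}}) :
    (triangle a b c).pweight P = 2*((a:ℤ)+b+c) - 14 := by
  rw [Multigraph.pweight, Multigraph.partsWeight, h,
    Finset.sum_insert (show ({0}:Finset (Fin 3)) ∉ ({{1},{2}} : Finset _) by decide),
    Finset.sum_pair (show ({1}:Finset (Fin 3)) ≠ {2} by decide), cut0, cut1, cut2,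
    show (#({{0},{1},{2}}:Finset (Finset (Fin 3)))) = 3 by decide]
  push_cast
  ring

lemma pweight_pair0 (a b c : ℕ) (P : Finpartition (Finset.univ : Finset (Fin 3)))
    (h : P.parts = {{0},{1,2}}) : (triangle a b c).pweight P = 2*((a:ℤ)+b) - 4 := by
  rw [Multigraph.pweight, Multigraph.partsWeight, h,
    Finset.sum_pair (show ({0}:Finset (Fin 3)) ≠ {1,2} by decide), cut0, cut12,
    show (#({{0},{1,2}}:Finset (Finset (Fin 3)))) = 2 by decide]
  push_cast
  ring

lemma pweight_pair1 (a b c : ℕ) (P : Finpartition (Finset.univ : Finset (Fin 3)))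
    (h : P.parts = {{1},{0,2}}) : (triangle a b c).pweight P = 2*((a:ℤ)+c) - 4 := by
  rw [Multigraph.pweight, Multigraph.partsWeight, h,
    Finset.sum_pair (show ({1}:Finset (Fin 3)) ≠ {0,2} by decide), cut1, cut02,
    show (#({{1},{0,2}}:Finset (Finset (Fin 3)))) = 2 by decide]
  push_cast
  ring

lemma pweight_pair2 (a b c : ℕ) (P : Finpartition (Finset.univ : Finset (Fin 3)))
    (h : P.parts = {{2},{0,1}}) : (triangle a b c).pweight P = 2*((b:ℤ)+c) - 4 := by
  rw [Multigraph.pweight, Multigraph.partsWeight, h,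
    Finset.sum_pair (show ({2}:Finset (Fin 3)) ≠ {0,1} by decide), cut2, cut01,
    show (#({{2},{0,1}}:Finset (Finset (Fin 3)))) = 2 by decide]
  push_cast
  ring

lemma psum0 (a b c : ℕ) :
    (∑ u ∈ ({0}:Finset (Fin 3)), ∑ v ∈ ({1,2}:Finset (Fin 3)), (triangle a b c).mult u v)
      = a + b := by simp [triangle, triMult]

lemma psum1 (a b c : ℕ) :
    (∑ u ∈ ({1}:Finset (Fin 3)), ∑ v ∈ ({0,2}:Finset (Fin 3)), (triangle a b c).mult u v)
      = a + c := by simp [triangle, triMult]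

lemma psum2 (a b c : ℕ) :
    (∑ u ∈ ({2}:Finset (Fin 3)), ∑ v ∈ ({0,1}:Finset (Fin 3)), (triangle a b c).mult u v)
      = b + c := by simp [triangle, triMult]

lemma notInN5_kTwo {n : ℕ} (h2 : n ≠ 2) (h3 : n ≠ 3) : ¬ InN5 (kTwo n) := by
  rintro (h|h|h|h|h|h)
  · exact h2 (kTwo_inj h)
  · exact h3 (kTwo_inj h)
  all_goals (have := h.card_eq; simp at this)

lemma notInN5_tri {a b c : ℕ} (h8 : 8 ≤ a + b + c) : ¬ InN5 (triangle a b c) := by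
  rintro (h|h|h|h|h|h)
  · have := h.card_eq; simp at this
  · have := h.card_eq; simp at this
  · have := h.sum_eq
    rw [tri_sum, show ∑ u, ∑ v, (triangle 1 3 3).mult u v = 14 from by decide] at this
    omega
  · have := h.sum_eq
    rw [tri_sum, show ∑ u, ∑ v, (triangle 2 2 3).mult u v = 14 from by decide] at this
    omega
  · have := h.card_eq; simp at this
  · have := h.card_eq; simp at this

lemma tri_conn (a b c : ℕ) (hab : 4 ≤ a + b) (hac : 4 ≤ a + c) (hbc : 4 ≤ b + c) :
    (triangle a b c).Connected := by
  set G := (triangle a b c).toSimpleGraph with hG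
  have adj01 : 0 < a → G.Adj 0 1 := fun h => h
  have adj02 : 0 < b → G.Adj 0 2 := fun h => h
  have adj12 : 0 < c → G.Adj 1 2 := fun h => h
  have R01 : G.Reachable 0 1 := by
    rcases Nat.eq_zero_or_pos a with h0 | h0
    · exact ((adj02 (by omega)).reachable).trans (adj12 (by omega)).reachable.symm
    · exact (adj01 h0).reachable
  have R02 : G.Reachable 0 2 := by
    rcases Nat.eq_zero_or_pos b with h0 | h0
    · exact ((adj01 (by omega)).reachable).trans ((adj12 (by omega)).reachable)
    · exact (adj02 h0).reachable
  rw [Multigraph.Connected, SimpleGraph.connected_iff]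
  refine ⟨fun u v => ?_, ⟨0⟩⟩
  fin_cases u <;> fin_cases v
  · rfl
  · exact R01
  · exact R02
  · exact R01.symm
  · rfl
  · exact R01.symm.trans R02
  · exact R02.symm
  · exact R02.symm.trans R01
  · rfl

def Psing : Finpartition (Finset.univ : Finset (Fin 3)) :=
  ⟨{{0},{1},{2}}, by decide, by decide, by decide⟩
def Ppair0 : Finpartition (Finset.univ : Finset (Fin 3)) :=
  ⟨{{0},{1,2}}, by decide, by decide, by decide⟩
def Ppair1 : Finpartition (Finset.univ : Finset (Fin 3)) :=
  ⟨{{1},{0,2}}, by decide, by decide, by decide⟩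
def Ppair2 : Finpartition (Finset.univ : Finset (Fin 3)) :=
  ⟨{{2},{0,1}}, by decide, by decide, by decide⟩

/-- `T_{a,b,c}` is `𝒮₅`-contractible iff `a + b + c ≥ 8` and
`min{a+b, a+c, b+c} ≥ 4`. -/
theorem s5_triangle (a b c : ℕ) :
    S5Contractible (triangle a b c) ↔
      8 ≤ a + b + c ∧ 4 ≤ a + b ∧ 4 ≤ a + c ∧ 4 ≤ b + c := by
  constructor
  · rintro ⟨hconn, hw, hno⟩
    have hw0 := hw Ppair0 (by decide)
    have hw1 := hw Ppair1 (by decide)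
    have hw2 := hw Ppair2 (by decide)
    have hws := hw Psing (by decide)
    rw [pweight_pair0 a b c Ppair0 rfl] at hw0
    rw [pweight_pair1 a b c Ppair1 rfl] at hw1
    rw [pweight_pair2 a b c Ppair2 rfl] at hw2
    rw [pweight_sing a b c Psing rfl] at hws
    have iso0 : ((triangle a b c).contract Ppair0).Iso (kTwo (a+b)) := by
      have := contract_pair_iso (triangle a b c) Ppair0 {0} {1,2} (by decide) rfl
      rwa [psum0] at this
    have iso1 : ((triangle a b c).contract Ppair1).Iso (kTwo (a+c)) := by
      have := contract_pair_iso (triangle a b c) Ppair1 {1} {0,2} (by decide) rfl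
      rwa [psum1] at this
    have iso2 : ((triangle a b c).contract Ppair2).Iso (kTwo (b+c)) := by
      have := contract_pair_iso (triangle a b c) Ppair2 {2} {0,1} (by decide) rfl
      rwa [psum2] at this
    have key : ∀ n, ¬ ((triangle a b c).contract Ppair0).Iso (kTwo n) ∨ n ≠ 2 := by
      intro n
      by_cases hn : n = 2
      · subst hn
        exact Or.inl fun hiso => hno Ppair0 (Or.inl hiso)
      · exact Or.inr hn
    have hne : ∀ (P : Finpartition (Finset.univ : Finset (Fin 3))) (n : ℕ),
        ((triangle a b c).contract P).Iso (kTwo n) → n ≠ 2 ∧ n ≠ 3 := by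
      intro P n hiso
      constructor
      · rintro rfl; exact hno P (Or.inl hiso)
      · rintro rfl; exact hno P (Or.inr (Or.inl hiso))
    obtain ⟨hab2, hab3⟩ := hne Ppair0 _ iso0
    obtain ⟨hac2, hac3⟩ := hne Ppair1 _ iso1
    obtain ⟨hbc2, hbc3⟩ := hne Ppair2 _ iso2
    have hab : 4 ≤ a + b := by omega
    have hac : 4 ≤ a + c := by omega
    have hbc : 4 ≤ b + c := by omega
    have h8 : 8 ≤ a + b + c := by
      by_contra hcon
      have hsum : a + b + c = 7 := by omega
      have isoS := contract_singletons_iso (triangle a b c) Psing rfl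
      have hIn : ¬ InN5 (triangle a b c) := fun hI => hno Psing (inN5_congr isoS.symm hI)
      have ha3 : a ≤ 3 := by omega
      have hb3 : b ≤ 3 := by omega
      have hc3 : c ≤ 3 := by omega
      have ha1 : 1 ≤ a := by omega
      have hb1 : 1 ≤ b := by omega
      have hc1 : 1 ≤ c := by omega
      interval_cases a <;> interval_cases b <;> interval_cases c <;> first
        | omega
        | exact hIn (Or.inr (Or.inr (Or.inl ⟨Equiv.refl _, by decide⟩)))
        | exact hIn (Or.inr (Or.inr (Or.inl ⟨Equiv.swap 0 1, by decide⟩)))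
        | exact hIn (Or.inr (Or.inr (Or.inl ⟨Equiv.swap 0 2, by decide⟩)))
        | exact hIn (Or.inr (Or.inr (Or.inl ⟨Equiv.swap 1 2, by decide⟩)))
        | exact hIn (Or.inr (Or.inr (Or.inl ⟨finRotate 3, by decide⟩)))
        | exact hIn (Or.inr (Or.inr (Or.inl ⟨(finRotate 3).symm, by decide⟩)))
        | exact hIn (Or.inr (Or.inr (Or.inr (Or.inl ⟨Equiv.refl _, by decide⟩))))
        | exact hIn (Or.inr (Or.inr (Or.inr (Or.inl ⟨Equiv.swap 0 1, by decide⟩))))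
        | exact hIn (Or.inr (Or.inr (Or.inr (Or.inl ⟨Equiv.swap 0 2, by decide⟩))))
        | exact hIn (Or.inr (Or.inr (Or.inr (Or.inl ⟨Equiv.swap 1 2, by decide⟩))))
        | exact hIn (Or.inr (Or.inr (Or.inr (Or.inl ⟨finRotate 3, by decide⟩))))
        | exact hIn (Or.inr (Or.inr (Or.inr (Or.inl ⟨(finRotate 3).symm, by decide⟩))))
    exact ⟨h8, hab, hac, hbc⟩
  · rintro ⟨h8, hab, hac, hbc⟩
    have hpd : ∀ (P : Finpartition (Finset.univ : Finset (Fin 3))),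
        ∀ A ∈ P.parts, ∀ B ∈ P.parts, A ≠ B → Disjoint A B := by
      intro P A hA B hB hAB
      exact P.supIndep.pairwiseDisjoint hA hB hAB
    refine ⟨tri_conn a b c hab hac hbc, ?_, ?_⟩
    · intro P hcard
      rcases parts_cases P.parts P.sup_parts P.bot_notMem (hpd P) with h|h|h|h|h
      · rw [pweight_sing a b c P h]; omega
      · rw [pweight_pair0 a b c P h]; omega
      · rw [pweight_pair1 a b c P h]; omega
      · rw [pweight_pair2 a b c P h]; omega
      · rw [h] at hcard; simp at hcard
    · intro P hI
      rcases parts_cases P.parts P.sup_parts P.bot_notMem (hpd P) with h|h|h|h|h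
      · exact notInN5_tri h8 (inN5_congr (contract_singletons_iso _ _ h) hI)
      · have iso := contract_pair_iso (triangle a b c) P {0} {1,2} (by decide) h
        rw [psum0] at iso
        exact notInN5_kTwo (by omega) (by omega) (inN5_congr iso hI)
      · have iso := contract_pair_iso (triangle a b c) P {1} {0,2} (by decide) h
        rw [psum1] at iso
        exact notInN5_kTwo (by omega) (by omega) (inN5_congr iso hI)
      · have iso := contract_pair_iso (triangle a b c) P {2} {0,1} (by decide) h
        rw [psum2] at iso
        exact notInN5_kTwo (by omega) (by omega) (inN5_congr iso hI)
      · have hc := inN5_card hI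
        rw [Fintype.card_coe, h, Finset.card_singleton] at hc
        omega
end

section
/- Every graph G on 4 vertices that contains a spanning subgraph G' with e(G') ≥ 12, minimum degree δ(G') ≥ 4, and maximum edge multiplicity μ(G') ≤ 4 satisfies: every partition 𝒫 of V(G') has w_{G'}(𝒫) ≥ 0. -/
open Finset

namespace Multigraph

variable {V : Type*} [Fintype V] [DecidableEq V]

/-- Number of (directed) edge-endpoints within `A`. -/
def inn (G : Multigraph V) (A : Finset V) : ℕ := ∑ u ∈ A, ∑ v ∈ A, G.mult u v

lemma split_aux (G : Multigraph V) (A : Finset V) :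
    G.inn A + G.cut A = ∑ u ∈ A, ∑ v, G.mult u v := by
  rw [inn, cut, ← Finset.sum_add_distrib]
  exact Finset.sum_congr rfl fun u _ => Finset.sum_add_sum_compl A _

lemma partition_sum (G : Multigraph V) (P : Finpartition (univ : Finset V)) :
    ∑ A ∈ P.parts, (G.inn A + G.cut A) = ∑ u, ∑ v, G.mult u v := by
  simp_rw [split_aux]
  calc ∑ A ∈ P.parts, ∑ u ∈ A, ∑ v, G.mult u v
      = ∑ u ∈ P.parts.biUnion id, ∑ v, G.mult u v := (Finset.sum_biUnion P.disjoint).symm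
    _ = ∑ u, ∑ v, G.mult u v := by rw [P.biUnion_parts]

lemma cut_compl (G : Multigraph V) (A : Finset V) : G.cut Aᶜ = G.cut A := by
  rw [cut, cut, compl_compl, Finset.sum_comm]
  exact Finset.sum_congr rfl fun u _ => Finset.sum_congr rfl fun v _ => G.symm v u

lemma cut_singleton (G : Multigraph V) (v : V) : G.cut {v} = G.degree v := by
  rw [cut, Finset.sum_singleton, degree, ← Finset.sum_add_sum_compl {v} (G.mult v),
    Finset.sum_singleton, G.loopless, zero_add]

lemma inn_singleton (G : Multigraph V) {A : Finset V} (h : A.card = 1) : G.inn A = 0 := by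
  obtain ⟨v, rfl⟩ := Finset.card_eq_one.mp h
  simp [inn, G.loopless]

lemma inn_pair (G : Multigraph V) (hmu : ∀ u v, G.mult u v ≤ 4)
    {A : Finset V} (h : A.card = 2) : G.inn A ≤ 8 := by
  obtain ⟨u, v, huv, rfl⟩ := Finset.card_eq_two.mp h
  have h1 := hmu u v
  have h2 := G.symm u v
  simp [inn, Finset.sum_pair huv, G.loopless]
  omega

end Multigraph


open Multigraph

/-- if a graph `G` on 4 vertices has a spanning subgraph `G'` with
`e(G') ≥ 12`, `δ(G') ≥ 4` and `μ(G') ≤ 4`, then every partition `𝒫` of `V(G')`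
satisfies `w_{G'}(𝒫) ≥ 0`. -/
theorem four_vertex_weights {V : Type*} [Fintype V] [DecidableEq V]
    (G G' : Multigraph V) (hcard : Fintype.card V = 4)
    (hsub : ∀ u v, G'.mult u v ≤ G.mult u v)
    (he : 12 ≤ G'.edgeCount)
    (hdeg : ∀ v, 4 ≤ G'.degree v)
    (hmu : ∀ u v, G'.mult u v ≤ 4) :
    ∀ P : Finpartition (univ : Finset V), 0 ≤ G'.pweight P := by
  intro P
  have hS : 24 ≤ ∑ u, ∑ v, G'.mult u v := by
    have h2 : 12 * 2 ≤ ∑ u, ∑ v, G'.mult u v := (Nat.le_div_iff_mul_le (by norm_num)).mp he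
    omega
  have hsum : ∑ A ∈ P.parts, A.card = 4 := by
    rw [P.sum_card_parts, Finset.card_univ, hcard]
  have ht4 : P.parts.card ≤ 4 := by
    have := P.card_parts_le_card
    rwa [Finset.card_univ, hcard] at this
  have ht1 : 1 ≤ P.parts.card := by
    have hne : (univ : Finset V).Nonempty := by
      rw [← Finset.card_pos, Finset.card_univ, hcard]; norm_num
    exact (P.parts_nonempty (by simpa [Finset.bot_eq_empty] using hne.ne_empty)).card_pos
  rcases (by omega : P.parts.card = 1 ∨ P.parts.card = 2 ∨ P.parts.card = 3 ∨
      P.parts.card = 4) with h1 | h2 | h3 | h4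
  · -- one part: it must be univ, whose cut is 0
    obtain ⟨A, hA⟩ := Finset.card_eq_one.mp h1
    have hAu : A = univ := by
      have h := P.sup_parts
      rwa [hA, Finset.sup_singleton, id] at h
    simp only [pweight, partsWeight, hA, hAu, Finset.sum_singleton, Finset.card_singleton]
    simp only [cut, Finset.compl_univ, Finset.sum_empty, Finset.sum_const_zero]
    norm_num
  · -- two parts A, B with B = Aᶜ
    obtain ⟨A, B, hAB, hP⟩ := Finset.card_eq_two.mp h2
    have hAm : A ∈ P.parts := by rw [hP]; simp
    have hBm : B ∈ P.parts := by rw [hP]; simp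
    have hdisj : Disjoint A B := P.disjoint hAm hBm hAB
    have hsup : A ⊔ B = univ := by
      have h := P.sup_parts
      rwa [hP, Finset.sup_insert, Finset.sup_singleton, id] at h
    have hcompl : B = Aᶜ := by
      have hc : IsCompl A B :=
        ⟨hdisj, codisjoint_iff.mpr (hsup.trans Finset.top_eq_univ.symm)⟩
      exact hc.compl_eq.symm
    have hcut : G'.cut B = G'.cut A := by rw [hcompl, cut_compl]
    have hcA : 1 ≤ A.card := (P.nonempty_of_mem_parts hAm).card_pos
    have hcB : 1 ≤ B.card := (P.nonempty_of_mem_parts hBm).card_pos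
    have hcAB : A.card + B.card = 4 := by
      rwa [hP, Finset.sum_pair hAB] at hsum
    simp only [pweight, partsWeight, hP, Finset.sum_pair hAB, Finset.card_pair hAB]
    rcases (by omega : A.card = 1 ∨ B.card = 1 ∨ (A.card = 2 ∧ B.card = 2)) with
      ha | hb | ⟨hA2, hB2⟩
    · obtain ⟨v, hAv⟩ := Finset.card_eq_one.mp ha
      have hd := hdeg v
      have e1 : G'.cut A = G'.degree v := by rw [hAv, cut_singleton]
      have e2 : G'.cut B = G'.degree v := by rw [hcut, e1]
      rw [e1, e2]; push_cast; omega
    · obtain ⟨v, hBv⟩ := Finset.card_eq_one.mp hb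
      have hd := hdeg v
      have e1 : G'.cut B = G'.degree v := by rw [hBv, cut_singleton]
      have e2 : G'.cut A = G'.degree v := by rw [← hcut, e1]
      rw [e1, e2]; push_cast; omega
    · have key := partition_sum G' P
      rw [hP, Finset.sum_pair hAB] at key
      have iA := inn_pair G' hmu hA2
      have iB := inn_pair G' hmu hB2
      have hle : 8 ≤ G'.cut A + G'.cut B := by omega
      push_cast; omega
  · -- three parts: sizes are 2,1,1 in some order
    obtain ⟨A, B, C, hAB, hAC, hBC, hP⟩ := Finset.card_eq_three.mp h3
    have hAm : A ∈ P.parts := by rw [hP]; simp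
    have hBm : B ∈ P.parts := by rw [hP]; simp
    have hCm : C ∈ P.parts := by rw [hP]; simp
    have hcA : 1 ≤ A.card := (P.nonempty_of_mem_parts hAm).card_pos
    have hcB : 1 ≤ B.card := (P.nonempty_of_mem_parts hBm).card_pos
    have hcC : 1 ≤ C.card := (P.nonempty_of_mem_parts hCm).card_pos
    have hsum3 : A.card + B.card + C.card = 4 := by
      rw [hP, Finset.sum_insert (by simp [hAB, hAC]),
        Finset.sum_insert (by simp [hBC]), Finset.sum_singleton] at hsum
      omega
    have key := partition_sum G' P
    rw [hP, Finset.sum_insert (by simp [hAB, hAC]),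
      Finset.sum_insert (by simp [hBC]), Finset.sum_singleton] at key
    have hbound : G'.inn A + G'.inn B + G'.inn C ≤ 8 := by
      rcases (by omega : (A.card = 2 ∧ B.card = 1 ∧ C.card = 1) ∨
          (A.card = 1 ∧ B.card = 2 ∧ C.card = 1) ∨
          (A.card = 1 ∧ B.card = 1 ∧ C.card = 2)) with
        ⟨x1, x2, x3⟩ | ⟨x1, x2, x3⟩ | ⟨x1, x2, x3⟩
      · have i1 := inn_pair G' hmu x1
        have i2 := inn_singleton G' x2
        have i3 := inn_singleton G' x3
        omega
      · have i1 := inn_singleton G' x1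
        have i2 := inn_pair G' hmu x2
        have i3 := inn_singleton G' x3
        omega
      · have i1 := inn_singleton G' x1
        have i2 := inn_singleton G' x2
        have i3 := inn_pair G' hmu x3
        omega
    simp only [pweight, partsWeight, hP, Finset.sum_insert (by simp [hAB, hAC] :
        A ∉ ({B, C} : Finset (Finset V))),
      Finset.sum_insert (by simp [hBC] : B ∉ ({C} : Finset (Finset V))),
      Finset.sum_singleton,
      Finset.card_insert_of_notMem (by simp [hAB, hAC] :
        A ∉ ({B, C} : Finset (Finset V))),
      Finset.card_insert_of_notMem (by simp [hBC] : B ∉ ({C} : Finset (Finset V))),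
      Finset.card_singleton]
    push_cast
    omega
  · -- four parts: all singletons
    have hone : ∀ A ∈ P.parts, A.card = 1 := by
      intro A hA
      by_contra hA1
      have h2le : 2 ≤ A.card := by
        have := (P.nonempty_of_mem_parts hA).card_pos
        omega
      have hge : ∑ B ∈ P.parts, B.card ≥ A.card + ∑ B ∈ P.parts.erase A, 1 := by
        rw [← Finset.sum_erase_add _ _ hA]
        have : ∑ B ∈ P.parts.erase A, 1 ≤ ∑ B ∈ P.parts.erase A, B.card :=
          Finset.sum_le_sum fun B hB =>
            (P.nonempty_of_mem_parts (Finset.mem_of_mem_erase hB)).card_pos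
        omega
      rw [Finset.sum_const, smul_eq_mul, Finset.card_erase_of_mem hA, h4] at hge
      omega
    have key := partition_sum G' P
    have hz : ∑ A ∈ P.parts, (G'.inn A + G'.cut A) = ∑ A ∈ P.parts, G'.cut A :=
      Finset.sum_congr rfl fun A hA => by rw [inn_singleton G' (hone A hA), zero_add]
    rw [hz] at key
    simp only [pweight, partsWeight, h4]
    rw [← Nat.cast_sum]
    omega
end
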